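/- For every integer m, the identities 𝒰_{−m} = 1/𝒰_m and 𝒱_{1−m} = 1/𝒱_{m+1} hold in ℂ(y). -/
import Mathlib


/-- The derivative on the field `ℂ(y)` of complex rational functions, computed via the
quotient rule applied to the lowest-terms representation `num/denom`. -/
noncomputable def rfD (f : RatFunc ℂ) : RatFunc ℂ :=
  (algebraMap (Polynomial ℂ) (RatFunc ℂ) (Polynomial.derivative f.num) *
      algebraMap (Polynomial ℂ) (RatFunc ℂ) f.denom -
    algebraMap (Polynomial ℂ) (RatFunc ℂ) f.num *
      algebraMap (Polynomial ℂ) (RatFunc ℂ) (Polynomial.derivative f.denom)) /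
    algebraMap (Polynomial ℂ) (RatFunc ℂ) f.denom ^ 2

/-- The pairs `(𝒰_m, 𝒱_m)` for `m = 0, 1, 2, …` via the forward recursion. -/
noncomputable def UVpos : ℕ → RatFunc ℂ × RatFunc ℂ
  | 0 => (1, -RatFunc.X / 6)
  | n + 1 =>
    (-(1 / 6 : RatFunc ℂ) * RatFunc.X * (UVpos n).1 - rfD (UVpos n).1 ^ 2 / (UVpos n).1 +
        (1 / 2 : RatFunc ℂ) * rfD (rfD (UVpos n).1),
      1 / (UVpos n).1)

/-- The pairs `(𝒰_{-m}, 𝒱_{-m})` for `m = 0, 1, 2, …` via the backward recursion. -/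
noncomputable def UVneg : ℕ → RatFunc ℂ × RatFunc ℂ
  | 0 => (1, -RatFunc.X / 6)
  | n + 1 =>
    (1 / (UVneg n).2,
      (1 / 2 : RatFunc ℂ) * rfD (rfD (UVneg n).2) - rfD (UVneg n).2 ^ 2 / (UVneg n).2 -
        (1 / 6 : RatFunc ℂ) * RatFunc.X * (UVneg n).2)

/-- The rational function `𝒰_m ∈ ℂ(y)`, `m ∈ ℤ`. -/
noncomputable def 𝒰 (m : ℤ) : RatFunc ℂ :=
  if 0 ≤ m then (UVpos m.toNat).1 else (UVneg (-m).toNat).1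

/-- The rational function `𝒱_m ∈ ℂ(y)`, `m ∈ ℤ`. -/
noncomputable def 𝒱 (m : ℤ) : RatFunc ℂ :=
  if 0 ≤ m then (UVpos m.toNat).2 else (UVneg (-m).toNat).2

lemma rfD_one : rfD (1 : RatFunc ℂ) = 0 := by simp [rfD]

lemma rfD_zero : rfD (0 : RatFunc ℂ) = 0 := by simp [rfD]

/-- Key structural lemma: the backward sequence mirrors the forward one. -/
lemma UVneg_eq (n : ℕ) :
    (UVneg n).1 = 1 / (UVpos n).1 ∧ (UVneg n).2 = (UVpos (n + 1)).1 := by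
  induction n with
  | zero =>
    constructor
    · simp [UVneg, UVpos]
    · show -RatFunc.X / 6 = _
      simp [UVpos, rfD_one, rfD_zero]
      ring
  | succ n ih =>
    constructor
    · show 1 / (UVneg n).2 = _
      rw [ih.2]
    · show (1 / 2 : RatFunc ℂ) * rfD (rfD (UVneg n).2) - rfD (UVneg n).2 ^ 2 / (UVneg n).2 -
          (1 / 6 : RatFunc ℂ) * RatFunc.X * (UVneg n).2 = _
      rw [ih.2]
      show _ = -(1 / 6 : RatFunc ℂ) * RatFunc.X * (UVpos (n + 1)).1 -
          rfD (UVpos (n + 1)).1 ^ 2 / (UVpos (n + 1)).1 +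
          (1 / 2 : RatFunc ℂ) * rfD (rfD (UVpos (n + 1)).1)
      ring

lemma U_ofNat (n : ℕ) : 𝒰 (n : ℤ) = (UVpos n).1 := by simp [𝒰]

lemma V_ofNat (n : ℕ) : 𝒱 (n : ℤ) = (UVpos n).2 := by simp [𝒱]

lemma U_negNat (n : ℕ) : 𝒰 (-(n : ℤ)) = (UVneg n).1 := by
  cases n with
  | zero => simp [𝒰, UVneg, UVpos]
  | succ k =>
    have h : ¬ (0 : ℤ) ≤ -((k + 1 : ℕ) : ℤ) := by omega
    simp only [𝒰, if_neg h, neg_neg, Int.toNat_natCast]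

lemma V_negNat (n : ℕ) : 𝒱 (-(n : ℤ)) = (UVneg n).2 := by
  cases n with
  | zero => simp [𝒱, UVneg, UVpos]
  | succ k =>
    have h : ¬ (0 : ℤ) ≤ -((k + 1 : ℕ) : ℤ) := by omega
    simp only [𝒱, if_neg h, neg_neg, Int.toNat_natCast]

/-- For every integer `m`, the identities `𝒰_{−m} = 1/𝒰_m` and `𝒱_{1−m} = 1/𝒱_{m+1}`
hold in `ℂ(y)`. -/
theorem rational_PII_reflection (m : ℤ) :
    𝒰 (-m) = 1 / 𝒰 m ∧ 𝒱 (1 - m) = 1 / 𝒱 (m + 1) := by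
  have hVpos : ∀ n : ℕ, (UVpos (n + 1)).2 = 1 / (UVpos n).1 := fun n => rfl
  rcases m with n | n
  · constructor
    · have : -(Int.ofNat n) = -(n : ℤ) := rfl
      rw [this, U_negNat, (UVneg_eq n).1, show (Int.ofNat n : ℤ) = (n : ℤ) from rfl, U_ofNat]
    · cases n with
      | zero =>
        show 𝒱 1 = 1 / 𝒱 1
        have h1 : 𝒱 1 = 1 := by
          rw [show (1 : ℤ) = ((1 : ℕ) : ℤ) from rfl, V_ofNat, hVpos 0]
          simp [UVpos]
        rw [h1]; norm_num
      | succ k =>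
        have h1 : (1 : ℤ) - Int.ofNat (k + 1) = -(k : ℤ) := by rw [Int.ofNat_eq_natCast]; push_cast; ring
        have h2 : (Int.ofNat (k + 1) : ℤ) + 1 = ((k + 2 : ℕ) : ℤ) := by omega
        rw [h1, h2, V_negNat, (UVneg_eq k).2, V_ofNat, hVpos (k + 1), one_div_one_div]
  · constructor
    · have h1 : -(Int.negSucc n) = ((n + 1 : ℕ) : ℤ) := rfl
      have h2 : (Int.negSucc n : ℤ) = -((n + 1 : ℕ) : ℤ) := rfl
      rw [h1, h2, U_ofNat, U_negNat, (UVneg_eq (n + 1)).1, one_div_one_div]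
    · have h1 : (1 : ℤ) - Int.negSucc n = ((n + 2 : ℕ) : ℤ) := by rw [Int.negSucc_eq]; push_cast; ring
      have h2 : (Int.negSucc n : ℤ) + 1 = -((n : ℕ) : ℤ) := by rw [Int.negSucc_eq]; ring
      rw [h1, h2, V_ofNat, V_negNat, (UVneg_eq n).2, hVpos (n + 1)]
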